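/- Let ρ be a density matrix on ℂ^d ⊗ ℂ^d with marginals ρ_A (entries (ρ_A)_{i,k} = Σ_j ρ_{(i,j),(k,j)}) and ρ_B (entries (ρ_B)_{j,l} = Σ_i ρ_{(i,j),(i,l)}). Then the relative entropy of quantumness of ρ, Q(ρ) = min over product unitaries U ⊗ V of [ H(diag((U⊗V) ρ (U⊗V)†)) − S(ρ) ], is bounded above by the mutual information: Q(ρ) ≤ S(ρ_A) + S(ρ_B) − S(ρ). In particular Q(ρ) ≤ 2·log₂ d. -/

import Mathlib

open Matrix Kronecker BigOperators
open scoped ComplexOrder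

noncomputable section

/-- Shannon entropy (base 2) of a finitely supported vector of reals,
with the convention `0 · log₂ 0 = 0`. -/
def shannonEntropy {ι : Type*} [Fintype ι] (q : ι → ℝ) : ℝ :=
  ∑ i, -(q i) * Real.logb 2 (q i)

/-- Von Neumann entropy (base 2): the Shannon entropy of the vector of eigenvalues of
a Hermitian matrix (junk value `0` on non-Hermitian matrices). -/
def vNEntropy {ι : Type*} [Fintype ι] [DecidableEq ι] (M : Matrix ι ι ℂ) : ℝ :=
  if h : M.IsHermitian then shannonEntropy h.eigenvalues else 0

/-- The set of values `H(diag((U⊗V) ρ (U⊗V)†)) − S(ρ)` over product unitaries `U ⊗ V`;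
the relative entropy of quantumness `Q(ρ)` is its minimum (infimum). -/
def reqSet {d : ℕ} (ρ : Matrix (Fin d × Fin d) (Fin d × Fin d) ℂ) : Set ℝ :=
  {x : ℝ | ∃ U ∈ Matrix.unitaryGroup (Fin d) ℂ, ∃ V ∈ Matrix.unitaryGroup (Fin d) ℂ,
    x = shannonEntropy (fun q => (((U ⊗ₖ V) * ρ * (U ⊗ₖ V)ᴴ) q q).re) - vNEntropy ρ}

/-- The relative entropy of quantumness of a bipartite state. -/
def REQ {d : ℕ} (ρ : Matrix (Fin d × Fin d) (Fin d × Fin d) ℂ) : ℝ :=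
  sInf (reqSet ρ)

/-- The marginal on the first factor, `(ρ_A)_{i,k} = Σ_j ρ_{(i,j),(k,j)}`. -/
def margA {d : ℕ} (ρ : Matrix (Fin d × Fin d) (Fin d × Fin d) ℂ) :
    Matrix (Fin d) (Fin d) ℂ :=
  Matrix.of fun i k => ∑ j, ρ (i, j) (k, j)

/-- The marginal on the second factor, `(ρ_B)_{j,l} = Σ_i ρ_{(i,j),(i,l)}`. -/
def margB {d : ℕ} (ρ : Matrix (Fin d × Fin d) (Fin d × Fin d) ℂ) :
    Matrix (Fin d) (Fin d) ℂ :=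
  Matrix.of fun j l => ∑ i, ρ (i, j) (i, l)

/-! ### Auxiliary entropy lemmas -/

/-- Gibbs' inequality. -/
lemma gibbs_aux {ι : Type*} [Fintype ι] (p q : ι → ℝ) (hp : ∀ i, 0 ≤ p i)
    (hq : ∀ i, 0 ≤ q i) (hps : ∑ i, p i = 1) (hqs : ∑ i, q i ≤ 1)
    (habs : ∀ i, q i = 0 → p i = 0) :
    ∑ i, -(p i) * Real.logb 2 (p i) ≤ ∑ i, -(p i) * Real.logb 2 (q i) := by
  have key : ∑ i, (p i * Real.log (q i) - p i * Real.log (p i)) ≤ 0 := by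
    have step : ∀ i ∈ Finset.univ, p i * Real.log (q i) - p i * Real.log (p i) ≤ q i - p i := by
      intro i _
      rcases eq_or_lt_of_le (hp i) with h0 | h0
      · simp only [← h0, zero_mul, sub_zero, mul_zero]
        simpa using hq i
      · have hqi : 0 < q i := (hq i).lt_of_ne fun h => h0.ne' (habs i h.symm)
        have hlog := Real.log_le_sub_one_of_pos (div_pos hqi h0)
        have h2 : p i * Real.log (q i / p i) ≤ p i * (q i / p i - 1) :=
          mul_le_mul_of_nonneg_left hlog h0.le
        rw [Real.log_div hqi.ne' h0.ne'] at h2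
        have h3 : p i * (q i / p i - 1) = q i - p i := by field_simp
        nlinarith
    calc ∑ i, (p i * Real.log (q i) - p i * Real.log (p i))
        ≤ ∑ i, (q i - p i) := Finset.sum_le_sum step
      _ = (∑ i, q i) - ∑ i, p i := Finset.sum_sub_distrib _ _
      _ ≤ 0 := by rw [hps]; linarith
  have hkey : ∑ i, p i * Real.log (q i) - ∑ i, p i * Real.log (p i) ≤ 0 := by
    rw [← Finset.sum_sub_distrib]; exact key
  have hlog2 : (0:ℝ) < Real.log 2 := Real.log_pos one_lt_two
  have expand : ∀ f : ι → ℝ,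
      ∑ i, -(p i) * Real.logb 2 (f i) = (-∑ i, p i * Real.log (f i)) / Real.log 2 := by
    intro f
    rw [← Finset.sum_neg_distrib, Finset.sum_div]
    exact Finset.sum_congr rfl fun i _ => by rw [Real.logb]; ring
  rw [expand p, expand q]
  apply div_le_div_of_nonneg_right ?_ hlog2.le
  linarith

/-- Nonnegativity of Shannon entropy for probability vectors. -/
lemma shannon_nonneg {ι : Type*} [Fintype ι] (p : ι → ℝ) (hp : ∀ i, 0 ≤ p i)
    (hps : ∑ i, p i = 1) : 0 ≤ shannonEntropy p := by
  refine Finset.sum_nonneg fun i _ => ?_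
  have h1 : p i ≤ 1 := by
    rw [← hps]
    exact Finset.single_le_sum (fun j _ => hp j) (Finset.mem_univ i)
  have := Real.logb_nonpos (b := 2) one_lt_two (hp i) h1
  nlinarith [hp i]

/-- Shannon entropy is at most `log₂ d`. -/
lemma shannon_le_logb {d : ℕ} (hd : 1 ≤ d) (p : Fin d → ℝ) (hp : ∀ i, 0 ≤ p i)
    (hps : ∑ i, p i = 1) : shannonEntropy p ≤ Real.logb 2 d := by
  have hd0 : (0:ℝ) < d := by exact_mod_cast hd
  have := gibbs_aux p (fun _ => (d:ℝ)⁻¹) hp (fun _ => by positivity) hps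
    (by simp [Finset.sum_const, Finset.card_univ]
        rw [mul_inv_cancel₀ hd0.ne']) (fun i h => absurd h (by positivity))
  refine this.trans_eq ?_
  rw [show ∑ i : Fin d, -(p i) * Real.logb 2 (d:ℝ)⁻¹
      = (∑ i : Fin d, p i) * Real.logb 2 (d:ℝ) by
    rw [Finset.sum_mul]
    exact Finset.sum_congr rfl fun i _ => by rw [Real.logb_inv]; ring]
  rw [hps, one_mul]

/-- Subadditivity of Shannon entropy. -/
lemma shannon_subadd {ι κ : Type*} [Fintype ι] [Fintype κ] (p : ι × κ → ℝ)
    (hp : ∀ x, 0 ≤ p x) (hps : ∑ x, p x = 1) :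
    shannonEntropy p ≤ shannonEntropy (fun i => ∑ j, p (i, j))
      + shannonEntropy (fun j => ∑ i, p (i, j)) := by
  set a : ι → ℝ := fun i => ∑ j, p (i, j) with ha
  set b : κ → ℝ := fun j => ∑ i, p (i, j) with hb
  have ha0 : ∀ i, 0 ≤ a i := fun i => Finset.sum_nonneg fun j _ => hp _
  have hb0 : ∀ j, 0 ≤ b j := fun j => Finset.sum_nonneg fun i _ => hp _
  have hsa : ∑ i, a i = 1 := by
    simp only [ha]
    rw [← Fintype.sum_prod_type]
    exact hps
  have hsb : ∑ j, b j = 1 := by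
    simp only [hb]
    rw [Finset.sum_comm, ← Fintype.sum_prod_type]
    exact hps
  have hpa : ∀ x : ι × κ, p x ≤ a x.1 := by
    intro x
    exact Finset.single_le_sum (f := fun j => p (x.1, j)) (fun j _ => hp _) (Finset.mem_univ x.2)
  have hpb : ∀ x : ι × κ, p x ≤ b x.2 := by
    intro x
    exact Finset.single_le_sum (f := fun i => p (i, x.2)) (fun i _ => hp _) (Finset.mem_univ x.1)
  have habs : ∀ x : ι × κ, a x.1 * b x.2 = 0 → p x = 0 := by
    intro x hx
    rcases mul_eq_zero.mp hx with h | h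
    · exact le_antisymm (h ▸ hpa x) (hp x)
    · exact le_antisymm (h ▸ hpb x) (hp x)
  calc shannonEntropy p
      ≤ ∑ x : ι × κ, -(p x) * Real.logb 2 (a x.1 * b x.2) := by
        refine gibbs_aux p (fun x => a x.1 * b x.2) hp
          (fun x => mul_nonneg (ha0 _) (hb0 _)) hps ?_ habs
        rw [Fintype.sum_prod_type]
        calc ∑ i, ∑ j, a i * b j = (∑ i, a i) * ∑ j, b j := by
              rw [Finset.sum_mul]
              exact Finset.sum_congr rfl fun i _ => by rw [Finset.mul_sum]
          _ ≤ 1 := by rw [hsa, hsb, one_mul]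
    _ = shannonEntropy a + shannonEntropy b := by
        have hterm : ∀ x : ι × κ, -(p x) * Real.logb 2 (a x.1 * b x.2)
            = -(p x) * Real.logb 2 (a x.1) + -(p x) * Real.logb 2 (b x.2) := by
          intro x
          by_cases h1 : a x.1 = 0
          · have := habs x (by rw [h1, zero_mul])
            simp [this]
          by_cases h2 : b x.2 = 0
          · have := habs x (by rw [h2, mul_zero])
            simp [this]
          rw [Real.logb_mul h1 h2]; ring
        rw [Finset.sum_congr rfl fun x _ => hterm x, Finset.sum_add_distrib]
        simp only [shannonEntropy]
        congr 1
        · rw [Fintype.sum_prod_type]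
          refine Finset.sum_congr rfl fun i _ => ?_
          have h1 : ∑ y : κ, -p (i, y) * Real.logb 2 (a (i, y).1)
              = (∑ y : κ, p (i, y)) * -Real.logb 2 (a i) := by
            rw [Finset.sum_mul]
            exact Finset.sum_congr rfl fun y _ => by
              show -p (i, y) * Real.logb 2 (a i) = _
              ring
          rw [h1, show (∑ y : κ, p (i, y)) = a i from rfl]
          ring
        · rw [Fintype.sum_prod_type, Finset.sum_comm]
          refine Finset.sum_congr rfl fun j _ => ?_
          have h1 : ∑ i : ι, -p (i, j) * Real.logb 2 (b (i, j).2)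
              = (∑ i : ι, p (i, j)) * -Real.logb 2 (b j) := by
            rw [Finset.sum_mul]
            exact Finset.sum_congr rfl fun i _ => by
              show -p (i, j) * Real.logb 2 (b j) = _
              ring
          rw [h1, show (∑ i : ι, p (i, j)) = b j from rfl]
          ring

/-! ### Auxiliary matrix lemmas -/

lemma kron_conjTranspose {d : ℕ} (A B : Matrix (Fin d) (Fin d) ℂ) :
    (A ⊗ₖ B)ᴴ = Aᴴ ⊗ₖ Bᴴ := by
  ext ⟨i, j⟩ ⟨k, l⟩
  simp [conjTranspose_apply, kroneckerMap_apply, mul_comm]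

lemma margA_conj {d : ℕ} (ρ : Matrix (Fin d × Fin d) (Fin d × Fin d) ℂ)
    (A B C D : Matrix (Fin d) (Fin d) ℂ) (h : D * C = 1) :
    margA ((A ⊗ₖ C) * ρ * (B ⊗ₖ D)) = A * margA ρ * B := by
  have hDC : ∀ e b, ∑ j, D e j * C j b = if e = b then 1 else 0 := by
    intro e b
    have := congrFun (congrFun h e) b
    simpa [Matrix.mul_apply, Matrix.one_apply] using this
  ext i k
  simp only [margA, Matrix.of_apply, Matrix.mul_apply, kroneckerMap_apply,
    Fintype.sum_prod_type, Finset.sum_mul, Finset.mul_sum]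
  have L1 : ∑ j : Fin d, ∑ c : Fin d, ∑ e : Fin d, ∑ a : Fin d, ∑ b : Fin d,
        A i a * C j b * ρ (a, b) (c, e) * (B c k * D e j)
      = ∑ c : Fin d, ∑ e : Fin d, ∑ a : Fin d, ∑ b : Fin d,
        (A i a * ρ (a, b) (c, e) * B c k) * ∑ j : Fin d, D e j * C j b := by
    rw [Finset.sum_comm]
    refine Finset.sum_congr rfl fun c _ => ?_
    rw [Finset.sum_comm]
    refine Finset.sum_congr rfl fun e _ => ?_
    rw [Finset.sum_comm]
    refine Finset.sum_congr rfl fun a _ => ?_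
    rw [Finset.sum_comm]
    refine Finset.sum_congr rfl fun b _ => ?_
    rw [Finset.mul_sum]
    exact Finset.sum_congr rfl fun j _ => by ring
  rw [L1]
  simp only [hDC, mul_ite, mul_one, mul_zero]
  refine Finset.sum_congr rfl fun c _ => ?_
  rw [Finset.sum_comm]
  refine Finset.sum_congr rfl fun a _ => ?_
  rw [Finset.sum_comm]
  refine Finset.sum_congr rfl fun b _ => ?_
  simp [Finset.sum_ite_eq, Finset.sum_ite_eq']


lemma margB_conj {d : ℕ} (ρ : Matrix (Fin d × Fin d) (Fin d × Fin d) ℂ)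
    (A B C D : Matrix (Fin d) (Fin d) ℂ) (h : B * A = 1) :
    margB ((A ⊗ₖ C) * ρ * (B ⊗ₖ D)) = C * margB ρ * D := by
  have hBA : ∀ c a, ∑ i, B c i * A i a = if c = a then 1 else 0 := by
    intro c a
    have := congrFun (congrFun h c) a
    simpa [Matrix.mul_apply, Matrix.one_apply] using this
  ext j l
  simp only [margB, Matrix.of_apply, Matrix.mul_apply, kroneckerMap_apply,
    Fintype.sum_prod_type, Finset.sum_mul, Finset.mul_sum]
  have L1 : ∑ i : Fin d, ∑ c : Fin d, ∑ e : Fin d, ∑ a : Fin d, ∑ b : Fin d,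
        A i a * C j b * ρ (a, b) (c, e) * (B c i * D e l)
      = ∑ c : Fin d, ∑ e : Fin d, ∑ a : Fin d, ∑ b : Fin d,
        (C j b * ρ (a, b) (c, e) * D e l) * ∑ i : Fin d, B c i * A i a := by
    rw [Finset.sum_comm]
    refine Finset.sum_congr rfl fun c _ => ?_
    rw [Finset.sum_comm]
    refine Finset.sum_congr rfl fun e _ => ?_
    rw [Finset.sum_comm]
    refine Finset.sum_congr rfl fun a _ => ?_
    rw [Finset.sum_comm]
    refine Finset.sum_congr rfl fun b _ => ?_
    rw [Finset.mul_sum]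
    exact Finset.sum_congr rfl fun i _ => by ring
  rw [L1]
  simp only [hBA, mul_ite, mul_one, mul_zero]
  have L2 : ∑ c : Fin d, ∑ e : Fin d, ∑ a : Fin d, ∑ b : Fin d,
        (if c = a then C j b * ρ (a, b) (c, e) * D e l else 0)
      = ∑ e : Fin d, ∑ a : Fin d, ∑ b : Fin d, C j b * ρ (a, b) (a, e) * D e l := by
    rw [Finset.sum_comm]
    refine Finset.sum_congr rfl fun e _ => ?_
    rw [Finset.sum_comm]
    refine Finset.sum_congr rfl fun a _ => ?_
    rw [Finset.sum_comm]
    refine Finset.sum_congr rfl fun b _ => ?_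
    simp [Finset.sum_ite_eq, Finset.sum_ite_eq']
  rw [L2]
  refine Finset.sum_congr rfl fun e _ => ?_
  rw [Finset.sum_comm]

lemma diag_aux {ι : Type*} [Fintype ι] [DecidableEq ι] (ρ K : Matrix ι ι ℂ)
    (hρ : ρ.PosSemidef) (htr : ρ.trace = 1) (hK : Kᴴ * K = 1) :
    (∀ x, 0 ≤ ((K * ρ * Kᴴ) x x).re) ∧ ∑ x, ((K * ρ * Kᴴ) x x).re = 1 := by
  have hM : (K * ρ * Kᴴ).PosSemidef := hρ.mul_mul_conjTranspose_same K
  constructor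
  · intro x
    have h0 : 0 ≤ (K * ρ * Kᴴ) x x := by
      exact hM.diag_nonneg
    exact (Complex.nonneg_iff.mp h0).1
  · have htrM : (K * ρ * Kᴴ).trace = 1 := by
      rw [Matrix.trace_mul_comm, ← Matrix.mul_assoc, hK, Matrix.one_mul, htr]
    have h1 : (K * ρ * Kᴴ).trace = ∑ x, (K * ρ * Kᴴ) x x := rfl
    rw [← Complex.re_sum, ← h1, htrM]
    simp

lemma sum_eigenvalues_eq_one {ι : Type*} [Fintype ι] [DecidableEq ι]
    {ρ : Matrix ι ι ℂ} (h : ρ.IsHermitian) (htr : ρ.trace = 1) :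
    ∑ i, h.eigenvalues i = 1 := by
  have hW := Matrix.mem_unitaryGroup_iff'.mp (h.eigenvectorUnitary).2
  have h2 := congrArg Matrix.trace h.spectral_theorem
  rw [htr, Unitary.conjStarAlgAut_apply, Matrix.trace_mul_comm, ← Matrix.mul_assoc, hW, Matrix.one_mul,
    Matrix.trace_diagonal] at h2
  have h3 : ((∑ i, h.eigenvalues i : ℝ) : ℂ) = 1 := by
    rw [Complex.ofReal_sum, h2]
    rfl
  exact_mod_cast h3

lemma margA_isHermitian {d : ℕ} {ρ : Matrix (Fin d × Fin d) (Fin d × Fin d) ℂ}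
    (h : ρ.IsHermitian) : (margA ρ).IsHermitian := by
  ext i k
  rw [conjTranspose_apply]
  simp only [margA, Matrix.of_apply, star_sum]
  exact Finset.sum_congr rfl fun j _ => h.apply _ _

lemma margB_isHermitian {d : ℕ} {ρ : Matrix (Fin d × Fin d) (Fin d × Fin d) ℂ}
    (h : ρ.IsHermitian) : (margB ρ).IsHermitian := by
  ext j l
  rw [conjTranspose_apply]
  simp only [margB, Matrix.of_apply, star_sum]
  exact Finset.sum_congr rfl fun i _ => h.apply _ _

/-- The relative entropy of quantumness is bounded above by the quantum mutual
information `S(ρ_A) + S(ρ_B) − S(ρ)`; in particular it is at most `2 log₂ d`. -/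
theorem REQ_le_mutualInformation {d : ℕ} (hd : 1 ≤ d)
    (ρ : Matrix (Fin d × Fin d) (Fin d × Fin d) ℂ)
    (hρ : ρ.PosSemidef) (hρtr : ρ.trace = 1) :
    REQ ρ ≤ vNEntropy (margA ρ) + vNEntropy (margB ρ) - vNEntropy ρ ∧
    REQ ρ ≤ 2 * Real.logb 2 d := by
  have hA : (margA ρ).IsHermitian := margA_isHermitian hρ.1
  have hB : (margB ρ).IsHermitian := margB_isHermitian hρ.1
  set W₁ : Matrix (Fin d) (Fin d) ℂ := (hA.eigenvectorUnitary : Matrix (Fin d) (Fin d) ℂ)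
  set W₂ : Matrix (Fin d) (Fin d) ℂ := (hB.eigenvectorUnitary : Matrix (Fin d) (Fin d) ℂ)
  have hW₁ : W₁ * star W₁ = 1 := Matrix.mem_unitaryGroup_iff.mp (hA.eigenvectorUnitary).2
  have hW₁' : star W₁ * W₁ = 1 := Matrix.mem_unitaryGroup_iff'.mp (hA.eigenvectorUnitary).2
  have hW₂ : W₂ * star W₂ = 1 := Matrix.mem_unitaryGroup_iff.mp (hB.eigenvectorUnitary).2
  have hW₂' : star W₂ * W₂ = 1 := Matrix.mem_unitaryGroup_iff'.mp (hB.eigenvectorUnitary).2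
  set U : Matrix (Fin d) (Fin d) ℂ := star W₁ with hUdef
  set V : Matrix (Fin d) (Fin d) ℂ := star W₂ with hVdef
  have hU : U ∈ Matrix.unitaryGroup (Fin d) ℂ := by
    rw [Matrix.mem_unitaryGroup_iff, hUdef, star_star, hW₁']
  have hV : V ∈ Matrix.unitaryGroup (Fin d) ℂ := by
    rw [Matrix.mem_unitaryGroup_iff, hVdef, star_star, hW₂']
  have hUH : Uᴴ = W₁ := by rw [← Matrix.star_eq_conjTranspose, hUdef, star_star]
  have hVH : Vᴴ = W₂ := by rw [← Matrix.star_eq_conjTranspose, hVdef, star_star]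
  have hKK : (U ⊗ₖ V)ᴴ * (U ⊗ₖ V) = 1 := by
    rw [kron_conjTranspose, ← Matrix.mul_kronecker_mul, hUH, hVH, hW₁, hW₂,
      Matrix.one_kronecker_one]
  set p : Fin d × Fin d → ℝ := fun q => (((U ⊗ₖ V) * ρ * (U ⊗ₖ V)ᴴ) q q).re with hpdef
  obtain ⟨hp, hpsum⟩ := diag_aux ρ (U ⊗ₖ V) hρ hρtr hKK
  -- marginal identities
  have hMA : margA ((U ⊗ₖ V) * ρ * (U ⊗ₖ V)ᴴ)
      = Matrix.diagonal (RCLike.ofReal ∘ hA.eigenvalues) := by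
    rw [kron_conjTranspose, margA_conj ρ U Uᴴ V Vᴴ (by rw [hVH, hVdef, hW₂]), hUH]
    conv_lhs => rw [hA.spectral_theorem, Unitary.conjStarAlgAut_apply]
    rw [hUdef]
    rw [show star W₁ * (W₁ * Matrix.diagonal (RCLike.ofReal ∘ hA.eigenvalues) * star W₁) * W₁
        = (star W₁ * W₁) * Matrix.diagonal (RCLike.ofReal ∘ hA.eigenvalues) * (star W₁ * W₁) by
      simp only [Matrix.mul_assoc]]
    rw [hW₁', Matrix.one_mul, Matrix.mul_one]
  have hMB : margB ((U ⊗ₖ V) * ρ * (U ⊗ₖ V)ᴴ)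
      = Matrix.diagonal (RCLike.ofReal ∘ hB.eigenvalues) := by
    rw [kron_conjTranspose, margB_conj ρ U Uᴴ V Vᴴ (by rw [hUH, hUdef, hW₁]), hVH]
    conv_lhs => rw [hB.spectral_theorem, Unitary.conjStarAlgAut_apply]
    rw [hVdef]
    rw [show star W₂ * (W₂ * Matrix.diagonal (RCLike.ofReal ∘ hB.eigenvalues) * star W₂) * W₂
        = (star W₂ * W₂) * Matrix.diagonal (RCLike.ofReal ∘ hB.eigenvalues) * (star W₂ * W₂) by
      simp only [Matrix.mul_assoc]]
    rw [hW₂', Matrix.one_mul, Matrix.mul_one]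
  have ha : ∀ i, ∑ j, p (i, j) = hA.eigenvalues i := by
    intro i
    have h1 : ∑ j, p (i, j)
        = ((margA ((U ⊗ₖ V) * ρ * (U ⊗ₖ V)ᴴ)) i i).re := by
      rw [hpdef]
      rw [← Complex.re_sum]
      rfl
    rw [h1, hMA]
    simp
  have hb : ∀ j, ∑ i, p (i, j) = hB.eigenvalues j := by
    intro j
    have h1 : ∑ i, p (i, j)
        = ((margB ((U ⊗ₖ V) * ρ * (U ⊗ₖ V)ᴴ)) j j).re := by
      rw [hpdef]
      rw [← Complex.re_sum]
      rfl
    rw [h1, hMB]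
    simp
  -- entropies
  have hsub := shannon_subadd p hp hpsum
  rw [show (fun i => ∑ j, p (i, j)) = hA.eigenvalues from funext ha,
      show (fun j => ∑ i, p (i, j)) = hB.eigenvalues from funext hb] at hsub
  have haev : ∀ i, 0 ≤ hA.eigenvalues i := fun i =>
    (ha i) ▸ Finset.sum_nonneg fun j _ => hp _
  have hbev : ∀ j, 0 ≤ hB.eigenvalues j := fun j =>
    (hb j) ▸ Finset.sum_nonneg fun i _ => hp _
  have hasum : ∑ i, hA.eigenvalues i = 1 := by
    calc ∑ i, hA.eigenvalues i = ∑ i, ∑ j, p (i, j) :=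
          Finset.sum_congr rfl fun i _ => (ha i).symm
      _ = ∑ x, p x := (Fintype.sum_prod_type (f := p)).symm
      _ = 1 := hpsum
  have hbsum : ∑ j, hB.eigenvalues j = 1 := by
    calc ∑ j, hB.eigenvalues j = ∑ j, ∑ i, p (i, j) :=
          Finset.sum_congr rfl fun j _ => (hb j).symm
      _ = ∑ i, ∑ j, p (i, j) := Finset.sum_comm.symm
      _ = ∑ x, p x := (Fintype.sum_prod_type (f := p)).symm
      _ = 1 := hpsum
  have hvA : vNEntropy (margA ρ) = shannonEntropy hA.eigenvalues := by
    rw [vNEntropy, dif_pos hA]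
  have hvB : vNEntropy (margB ρ) = shannonEntropy hB.eigenvalues := by
    rw [vNEntropy, dif_pos hB]
  have hvρ : 0 ≤ vNEntropy ρ := by
    rw [vNEntropy, dif_pos hρ.1]
    exact shannon_nonneg _ hρ.eigenvalues_nonneg (sum_eigenvalues_eq_one hρ.1 hρtr)
  -- REQ bound
  have hbdd : BddBelow (reqSet ρ) := by
    refine ⟨-vNEntropy ρ, ?_⟩
    rintro x ⟨U', hU', V', hV', rfl⟩
    have hKK' : (U' ⊗ₖ V')ᴴ * (U' ⊗ₖ V') = 1 := by
      rw [kron_conjTranspose, ← Matrix.mul_kronecker_mul,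
        ← Matrix.star_eq_conjTranspose, ← Matrix.star_eq_conjTranspose,
        Matrix.mem_unitaryGroup_iff'.mp hU', Matrix.mem_unitaryGroup_iff'.mp hV',
        Matrix.one_kronecker_one]
    obtain ⟨hp', hs'⟩ := diag_aux ρ (U' ⊗ₖ V') hρ hρtr hKK'
    have := shannon_nonneg _ hp' hs'
    linarith
  have hmem : shannonEntropy p - vNEntropy ρ ∈ reqSet ρ := ⟨U, hU, V, hV, rfl⟩
  have hREQ : REQ ρ ≤ shannonEntropy p - vNEntropy ρ := csInf_le hbdd hmem
  have hmain : REQ ρ ≤ vNEntropy (margA ρ) + vNEntropy (margB ρ) - vNEntropy ρ := by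
    rw [hvA, hvB]
    linarith
  refine ⟨hmain, ?_⟩
  have h1 := shannon_le_logb hd _ haev hasum
  have h2 := shannon_le_logb hd _ hbev hbsum
  rw [hvA, hvB] at hmain
  linarith
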